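/- Let A be a symmetric n×n real matrix with A ≠ 0 (equivalently, A has a nonzero eigenvalue). Let λ be the eigenvalue of A of largest absolute value. Then the maximal interval of existence of the solution X(t) = A·(Id - t·A)⁻¹ of X' = X·X containing 0 is (1/μ₋, 1/μ₊) with appropriate conventions, where μ₊ = max(spectrum of A) (interpreted as +∞ bound if μ₊ ≤ 0) and μ₋ = min(spectrum of A) (interpreted as -∞ bound if μ₋ ≥ 0). In particular if all eigenvalues of A are nonpositive, X(t) exists for all t ≥ 0. -/

import Mathlib

open Matrix

lemma aux_isUnit_iff {n : ℕ} (A : Matrix (Fin n) (Fin n) ℝ) {t : ℝ} (ht : t ≠ 0) :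
    IsUnit (1 - t • A) ↔ t⁻¹ ∉ spectrum ℝ A := by
  rw [spectrum.mem_iff, not_not, Algebra.algebraMap_eq_smul_one]
  have := IsUnit.smul_sub_iff_sub_inv_smul (Units.mk0 t ht)⁻¹ A
  simpa [Units.smul_def] using this.symm

/-- For a nonzero symmetric matrix `A` with `μ₊ = sSup (spectrum ℝ A)` and
`μ₋ = sInf (spectrum ℝ A)`, the matrix `Id - t • A` is invertible for all `t` strictly
between `1/μ₋` and `1/μ₊` (with no constraint on the corresponding side when `μ₊ ≤ 0`
resp. `μ₋ ≥ 0`), and singular at the endpoints `1/μ₊` (if `μ₊ > 0`) and `1/μ₋`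
(if `μ₋ < 0`). In particular, if all eigenvalues are nonpositive, the solution exists
for all `t ≥ 0`. -/
theorem maximal_interval_of_existence {n : ℕ} (A : Matrix (Fin n) (Fin n) ℝ)
    (hA : A.IsSymm) (hA0 : A ≠ 0) :
    (∀ t : ℝ, (0 < sSup (spectrum ℝ A) → t < 1 / sSup (spectrum ℝ A)) →
        (sInf (spectrum ℝ A) < 0 → 1 / sInf (spectrum ℝ A) < t) →
        IsUnit (1 - t • A)) ∧
      (0 < sSup (spectrum ℝ A) → ¬ IsUnit (1 - (1 / sSup (spectrum ℝ A)) • A)) ∧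
      (sInf (spectrum ℝ A) < 0 → ¬ IsUnit (1 - (1 / sInf (spectrum ℝ A)) • A)) ∧
      ((∀ lam ∈ spectrum ℝ A, lam ≤ 0) → ∀ t : ℝ, 0 ≤ t → IsUnit (1 - t • A)) := by
  have hn : 0 < n := by
    rcases Nat.eq_zero_or_pos n with h | h
    · subst h; exact absurd (Subsingleton.elim A 0) hA0
    · exact h
  have : NeZero n := ⟨hn.ne'⟩
  have hH : A.IsHermitian := by
    rwa [Matrix.IsHermitian, conjTranspose_eq_transpose_of_trivial]
  have hfin : (spectrum ℝ A).Finite := Matrix.finite_real_spectrum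
  have hne : (spectrum ℝ A).Nonempty := by
    rw [hH.spectrum_real_eq_range_eigenvalues]
    exact Set.range_nonempty _
  set S := spectrum ℝ A with hS
  have hSup_mem : sSup S ∈ S := hne.csSup_mem hfin
  have hInf_mem : sInf S ∈ S := hne.csInf_mem hfin
  have hbdd : BddAbove S := hfin.bddAbove
  have hbddb : BddBelow S := hfin.bddBelow
  have key : ∀ t : ℝ, (0 < sSup S → t < 1 / sSup S) →
      (sInf S < 0 → 1 / sInf S < t) → IsUnit (1 - t • A) := by
    intro t h1 h2
    rcases eq_or_ne t 0 with rfl | ht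
    · simp
    rw [aux_isUnit_iff A ht]
    intro hmem
    have hle : t⁻¹ ≤ sSup S := le_csSup hbdd hmem
    have hge : sInf S ≤ t⁻¹ := csInf_le hbddb hmem
    rcases lt_or_gt_of_ne (inv_ne_zero ht) with hneg | hpos
    · have hI : sInf S < 0 := lt_of_le_of_lt hge hneg
      have h2' := h2 hI
      have ht' : t = (t⁻¹)⁻¹ := (inv_inv t).symm
      rw [ht', one_div] at h2'
      -- (sInf S)⁻¹ < (t⁻¹)⁻¹ with sInf S ≤ t⁻¹ < 0 : contradiction
      have h3 := inv_anti₀ (by linarith : (0:ℝ) < -t⁻¹) (by linarith : -t⁻¹ ≤ -(sInf S))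
      rw [inv_neg, inv_neg] at h3
      linarith
    · have hP : 0 < sSup S := lt_of_lt_of_le hpos hle
      have h1' := h1 hP
      have ht' : t = (t⁻¹)⁻¹ := (inv_inv t).symm
      rw [ht', one_div] at h1'
      have : (sSup S)⁻¹ ≤ (t⁻¹)⁻¹ := by
        exact inv_anti₀ hpos hle
      linarith
  refine ⟨key, ?_, ?_, ?_⟩
  · intro hP hU
    have h0 : (1 / sSup S) ≠ 0 := by positivity
    rw [aux_isUnit_iff A h0] at hU
    exact hU (by simpa using hSup_mem)
  · intro hI hU
    have h0 : (1 / sInf S) ≠ 0 := by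
      simp [hI.ne]
    rw [aux_isUnit_iff A h0] at hU
    exact hU (by simpa using hInf_mem)
  · intro hnp t ht
    rcases eq_or_lt_of_le ht with rfl | ht'
    · simp
    rw [aux_isUnit_iff A ht'.ne']
    intro hmem
    have := hnp _ hmem
    have : 0 < t⁻¹ := inv_pos.mpr ht'
    linarith
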